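/- Let p ≥ 1 be an integer and let X₁,…,X_p be independent integrable random vectors in a finite-dimensional real inner product space, each with the same mean m = E[Xᵢ] and with E‖Xᵢ − m‖² ≤ σ² for some σ ≥ 0. Then E[max_{1≤i≤p} ‖Xᵢ‖] ≤ σ·(1 + √(p − 1)) + ‖m‖. -/

import Mathlib

open MeasureTheory ProbabilityTheory

/-- Jensen's inequality for the square root under a probability measure. -/
lemma integral_sqrt_le_sqrt_integral' {Ω : Type*} [MeasureSpace Ω]
    [IsProbabilityMeasure (ℙ : Measure Ω)] {f : Ω → ℝ} (hf : Integrable f)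
    (h0 : ∀ ω, 0 ≤ f ω) (hsf : Integrable (fun ω => Real.sqrt (f ω))) :
    ∫ ω, Real.sqrt (f ω) ≤ Real.sqrt (∫ ω, f ω) :=
  Real.strictConcaveOn_sqrt.concaveOn.le_map_integral
    Real.continuous_sqrt.continuousOn isClosed_Ici (Filter.Eventually.of_forall h0) hf hsf

/-- Lemma 2 of the paper: the expected largest norm among `p` i.i.d.-mean random
vectors with common mean `m` and variance bound `σ²` is at most
`σ(1 + √(p−1)) + ‖m‖`. -/
theorem expected_max_norm_bound {E : Type*} [NormedAddCommGroup E]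
    [InnerProductSpace ℝ E] [FiniteDimensional ℝ E] [MeasurableSpace E] [BorelSpace E]
    {Ω : Type*} [MeasureSpace Ω] [IsProbabilityMeasure (ℙ : Measure Ω)]
    {p : ℕ} (hp : 1 ≤ p) (X : Fin p → Ω → E) (hmeas : ∀ i, Measurable (X i))
    (hindep : iIndepFun X ℙ)
    (hint : ∀ i, Integrable (X i)) {m : E} (hm : ∀ i, ∫ ω, X i ω ∂(ℙ : MeasureTheory.Measure Ω) = m)
    {σ : ℝ} (hσ : 0 ≤ σ) (hint2 : ∀ i, Integrable (fun ω => ‖X i ω - m‖ ^ 2))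
    (hvar : ∀ i, ∫ ω, ‖X i ω - m‖ ^ 2 ∂(ℙ : MeasureTheory.Measure Ω) ≤ σ ^ 2) :
    ∫ ω, (⨆ i, ‖X i ω‖) ∂(ℙ : MeasureTheory.Measure Ω) ≤ σ * (1 + Real.sqrt ((p : ℝ) - 1)) + ‖m‖ := by
  have i0 : Fin p := ⟨0, hp⟩
  set Y : Fin p → Ω → ℝ := fun i ω => ‖X i ω - m‖ with hY
  set S : Ω → ℝ := fun ω => ∑ i ∈ Finset.univ.erase i0, Y i ω ^ 2 with hSdef
  have hYnn : ∀ i ω, 0 ≤ Y i ω := fun i ω => norm_nonneg _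
  have hSnn : ∀ ω, 0 ≤ S ω := fun ω =>
    Finset.sum_nonneg fun i _ => sq_nonneg _
  -- measurability
  have hYmeas : ∀ i, Measurable (Y i) := fun i =>
    ((hmeas i).sub measurable_const).norm
  have hSmeas : Measurable S := by
    apply Finset.measurable_sum
    intro i _
    exact (hYmeas i).pow_const 2
  -- integrability
  have hY0int : Integrable (Y i0) := ((hint i0).sub (integrable_const m)).norm
  have hSint : Integrable S := integrable_finset_sum _ fun i _ => hint2 i
  have hsqrtSint : Integrable (fun ω => Real.sqrt (S ω)) := by
    refine Integrable.mono' (hSint.add (integrable_const 1))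
      (Real.continuous_sqrt.measurable.comp hSmeas).aestronglyMeasurable
      (Filter.Eventually.of_forall fun ω => ?_)
    rw [Real.norm_of_nonneg (Real.sqrt_nonneg _)]
    calc Real.sqrt (S ω) ≤ Real.sqrt ((1 + S ω) ^ 2) := by
          apply Real.sqrt_le_sqrt
          nlinarith [hSnn ω]
      _ = 1 + S ω := Real.sqrt_sq (by linarith [hSnn ω])
      _ = S ω + 1 := by ring
  -- pointwise bound
  have hpt : ∀ ω, (⨆ i, ‖X i ω‖) ≤ ‖m‖ + Y i0 ω + Real.sqrt (S ω) := by
    intro ω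
    haveI : Nonempty (Fin p) := ⟨i0⟩
    apply ciSup_le
    intro i
    have h1 : ‖X i ω‖ ≤ ‖m‖ + Y i ω := by
      have := norm_add_le (X i ω - m) m
      simp only [sub_add_cancel] at this
      calc ‖X i ω‖ ≤ ‖X i ω - m‖ + ‖m‖ := this
        _ = ‖m‖ + Y i ω := by rw [hY]; ring
    refine h1.trans ?_
    rcases eq_or_ne i i0 with rfl | hne
    · have := Real.sqrt_nonneg (S ω); linarith
    · have h2 : Y i ω ≤ Real.sqrt (S ω) := by
        rw [show Y i ω = Real.sqrt (Y i ω ^ 2) from (Real.sqrt_sq (hYnn i ω)).symm]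
        apply Real.sqrt_le_sqrt
        exact Finset.single_le_sum (f := fun j => Y j ω ^ 2)
          (fun j _ => sq_nonneg _) (Finset.mem_erase.mpr ⟨hne, Finset.mem_univ i⟩)
      have := hYnn i0 ω
      linarith
  -- integrate
  have hmono : ∫ ω, (⨆ i, ‖X i ω‖) ∂(ℙ : Measure Ω)
      ≤ ∫ ω, (‖m‖ + Y i0 ω + Real.sqrt (S ω)) ∂(ℙ : Measure Ω) := by
    apply integral_mono_of_nonneg
    · exact Filter.Eventually.of_forall fun ω =>
        Real.iSup_nonneg fun i => norm_nonneg _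
    · exact ((integrable_const ‖m‖).add hY0int).add hsqrtSint
    · exact Filter.Eventually.of_forall hpt
  have hsplit : ∫ ω, (‖m‖ + Y i0 ω + Real.sqrt (S ω)) ∂(ℙ : Measure Ω)
      = ‖m‖ + (∫ ω, Y i0 ω) + ∫ ω, Real.sqrt (S ω) := by
    have hf1 : Integrable (fun ω => ‖m‖ + Y i0 ω) := (integrable_const ‖m‖).add hY0int
    rw [integral_add hf1 hsqrtSint, integral_add (integrable_const ‖m‖) hY0int, integral_const]
    simp
  -- bound E Y i0 ≤ σ
  have hEY0 : ∫ ω, Y i0 ω ≤ σ := by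
    have h1 : ∫ ω, Y i0 ω = ∫ ω, Real.sqrt (Y i0 ω ^ 2) := by
      exact integral_congr_ae (Filter.Eventually.of_forall fun ω =>
        (Real.sqrt_sq (hYnn i0 ω)).symm)
    rw [h1]
    calc ∫ ω, Real.sqrt (Y i0 ω ^ 2)
        ≤ Real.sqrt (∫ ω, Y i0 ω ^ 2) := by
          refine integral_sqrt_le_sqrt_integral' (hint2 i0) (fun ω => sq_nonneg _) ?_
          exact hY0int.congr (Filter.Eventually.of_forall fun ω =>
            (Real.sqrt_sq (hYnn i0 ω)).symm)
      _ ≤ Real.sqrt (σ ^ 2) := Real.sqrt_le_sqrt (hvar i0)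
      _ = σ := Real.sqrt_sq hσ
  -- bound E sqrt S ≤ σ √(p-1)
  have hES : ∫ ω, Real.sqrt (S ω) ≤ σ * Real.sqrt ((p : ℝ) - 1) := by
    have h1 : ∫ ω, Real.sqrt (S ω) ≤ Real.sqrt (∫ ω, S ω) :=
      integral_sqrt_le_sqrt_integral' hSint hSnn hsqrtSint
    have h2 : ∫ ω, S ω ≤ ((p : ℝ) - 1) * σ ^ 2 := by
      rw [hSdef]
      rw [integral_finset_sum _ fun i _ => hint2 i]
      have hcard : ((Finset.univ.erase i0).card : ℝ) = (p : ℝ) - 1 := by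
        rw [Finset.card_erase_of_mem (Finset.mem_univ i0)]
        simp only [Finset.card_univ, Fintype.card_fin]
        rw [Nat.cast_sub hp]
        simp
      calc ∑ i ∈ Finset.univ.erase i0, ∫ ω, Y i ω ^ 2
          ≤ ∑ i ∈ Finset.univ.erase i0, σ ^ 2 :=
            Finset.sum_le_sum fun i _ => hvar i
        _ = ((p : ℝ) - 1) * σ ^ 2 := by rw [Finset.sum_const, nsmul_eq_mul, hcard]
    calc ∫ ω, Real.sqrt (S ω) ≤ Real.sqrt (((p : ℝ) - 1) * σ ^ 2) :=
          h1.trans (Real.sqrt_le_sqrt h2)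
      _ = Real.sqrt ((p : ℝ) - 1) * σ := by
          rw [Real.sqrt_mul (sub_nonneg.mpr (by exact_mod_cast hp)) (σ ^ 2), Real.sqrt_sq hσ]
      _ = σ * Real.sqrt ((p : ℝ) - 1) := mul_comm _ _
  calc ∫ ω, (⨆ i, ‖X i ω‖) ∂(ℙ : Measure Ω)
      ≤ ‖m‖ + (∫ ω, Y i0 ω) + ∫ ω, Real.sqrt (S ω) := hmono.trans_eq hsplit
    _ ≤ ‖m‖ + σ + σ * Real.sqrt ((p : ℝ) - 1) := by linarith
    _ = σ * (1 + Real.sqrt ((p : ℝ) - 1)) + ‖m‖ := by ring
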